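/- Let G be a locally compact abelian group with Pontryagin dual H, and let ν = (ν_N) be a sequence of probability measures on H. For g ∈ G, the following are equivalent: (i) the limit c_ν(g) := lim_{N→∞} ∫_H ⟨g,h⟩ dν_N(h) exists and |c_ν(g)| = 1; (ii) the function h ↦ ⟨g,h⟩ converges along the filter F_ν generated by the ν-density-1 sets. Moreover, if they hold, the filter limit equals c_ν(g). -/

import Mathlib

open MeasureTheory Filter Topology
open scoped ENNReal

/-- The filter generated by the measurable sets of `ν`-density one. -/
def densityFilter {X : Type*} [MeasurableSpace X] (ν : ℕ → Measure X) : Filter X :=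
  Filter.generate {J | MeasurableSet J ∧ Tendsto (fun N => ν N J) atTop (𝓝 1)}

section Aux

variable {X : Type*} [MeasurableSpace X] {ν : ℕ → Measure X}

lemma aux_mem_of_gen {J : Set X} (h1 : MeasurableSet J)
    (h2 : Tendsto (fun N => ν N J) atTop (𝓝 1)) : J ∈ densityFilter ν :=
  Filter.mem_generate_of_mem ⟨h1, h2⟩

lemma aux_toReal_tendsto (hν : ∀ N, IsProbabilityMeasure (ν N)) {J : Set X} {c : ℝ≥0∞}
    (hc : c ≠ ∞) :
    Tendsto (fun N => ν N J) atTop (𝓝 c) ↔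
      Tendsto (fun N => (ν N J).toReal) atTop (𝓝 c.toReal) := by
  refine (ENNReal.tendsto_toReal_iff (fun N => ?_) hc).symm
  haveI := hν N; exact measure_ne_top _ _

lemma aux_compl_iff (hν : ∀ N, IsProbabilityMeasure (ν N)) {J : Set X}
    (hJ : MeasurableSet J) :
    Tendsto (fun N => ν N J) atTop (𝓝 1) ↔ Tendsto (fun N => ν N Jᶜ) atTop (𝓝 0) := by
  have key : ∀ N, (ν N Jᶜ).toReal = 1 - (ν N J).toReal := by
    intro N
    haveI := hν N
    rw [prob_compl_eq_one_sub hJ,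
      ENNReal.toReal_sub_of_le prob_le_one (by norm_num)]
    simp
  rw [aux_toReal_tendsto hν (by norm_num), aux_toReal_tendsto hν (by norm_num)]
  simp only [ENNReal.toReal_one, ENNReal.toReal_zero, key]
  constructor
  · intro h
    have := (tendsto_const_nhds : Tendsto (fun _ : ℕ => (1:ℝ)) atTop (𝓝 1)).sub h
    simpa using this
  · intro h
    have := (tendsto_const_nhds : Tendsto (fun _ : ℕ => (1:ℝ)) atTop (𝓝 1)).sub h
    simpa [sub_sub_cancel] using this

lemma aux_sInter (hν : ∀ N, IsProbabilityMeasure (ν N)) {t : Set (Set X)} (htf : t.Finite)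
    (hts : t ⊆ {J | MeasurableSet J ∧ Tendsto (fun N => ν N J) atTop (𝓝 1)}) :
    MeasurableSet (⋂₀ t) ∧ Tendsto (fun N => ν N (⋂₀ t)) atTop (𝓝 1) := by
  refine Set.Finite.induction_on_subset (motive := fun (u : Set (Set X)) _ =>
      MeasurableSet (⋂₀ u) ∧ Tendsto (fun N => ν N (⋂₀ u)) atTop (𝓝 1)) t htf ?_ ?_
  · constructor
    · simp
    · have : ∀ N, ν N (⋂₀ (∅ : Set (Set X))) = 1 := by
        intro N; haveI := hν N; simp
      simp only [this]
      exact tendsto_const_nhds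
  · rintro a s haT _ _ ⟨ihm, iht⟩
    obtain ⟨ham, hat⟩ := hts haT
    have hins : ⋂₀ insert a s = a ∩ ⋂₀ s := Set.sInter_insert a s
    have hm : MeasurableSet (a ∩ ⋂₀ s) := ham.inter ihm
    refine ⟨by rw [hins]; exact hm, ?_⟩
    rw [aux_compl_iff hν (by rw [hins]; exact hm)]
    have hbound : ∀ N, ν N (⋂₀ insert a s)ᶜ ≤ ν N aᶜ + ν N (⋂₀ s)ᶜ := by
      intro N
      rw [hins, Set.compl_inter]
      exact measure_union_le _ _
    have h1 : Tendsto (fun N => ν N aᶜ + ν N (⋂₀ s)ᶜ) atTop (𝓝 0) := by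
      have := ((aux_compl_iff hν ham).mp hat).add ((aux_compl_iff hν ihm).mp iht)
      simpa using this
    exact tendsto_of_tendsto_of_tendsto_of_le_of_le tendsto_const_nhds h1
      (fun N => zero_le) hbound

lemma aux_mem_densityFilter (hν : ∀ N, IsProbabilityMeasure (ν N)) {J : Set X}
    (hJ : J ∈ densityFilter ν) :
    ∃ K : Set X, K ⊆ J ∧ MeasurableSet K ∧ Tendsto (fun N => ν N K) atTop (𝓝 1) := by
  rw [densityFilter, Filter.mem_generate_iff] at hJ
  obtain ⟨t, hts, htf, htJ⟩ := hJ
  obtain ⟨hm, ht⟩ := aux_sInter hν htf hts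
  exact ⟨⋂₀ t, htJ, hm, ht⟩

lemma aux_neBot (hν : ∀ N, IsProbabilityMeasure (ν N)) : (densityFilter ν).NeBot := by
  refine Filter.forall_mem_nonempty_iff_neBot.mp ?_
  intro J hJ
  obtain ⟨K, hKJ, _, hK⟩ := aux_mem_densityFilter hν hJ
  have hev : ∀ᶠ N in atTop, (1/2 : ℝ≥0∞) < ν N K :=
    hK.eventually_const_lt (by norm_num)
  obtain ⟨N, hN⟩ := hev.exists
  have : K.Nonempty := by
    by_contra h
    rw [Set.not_nonempty_iff_eq_empty] at h
    simp [h] at hN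
  exact this.mono hKJ

end Aux

lemma aux_norm_sub_sq (a c : ℂ) (ha : ‖a‖ = 1) (hc : ‖c‖ = 1) :
    ‖a - c‖ ^ 2 = 2 - 2 * ((starRingEnd ℂ) c * a).re := by
  have h1 : Complex.normSq a = 1 := by
    rw [← Complex.sq_norm, ha]; norm_num
  have h2 : Complex.normSq c = 1 := by
    rw [← Complex.sq_norm, hc]; norm_num
  have h4 : ‖a - c‖ ^ 2 = Complex.normSq (a - c) := by
    rw [← Complex.sq_norm]
  rw [h4, Complex.normSq_sub, h1, h2, mul_comm a ((starRingEnd ℂ) c)]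
  ring

lemma aux_re_le_one (c z : ℂ) (hc : ‖c‖ = 1) (hz : ‖z‖ = 1) :
    ((starRingEnd ℂ) c * z).re ≤ 1 := by
  calc ((starRingEnd ℂ) c * z).re ≤ ‖(starRingEnd ℂ) c * z‖ := Complex.re_le_norm _
  _ = 1 := by
    rw [norm_mul, Complex.norm_conj, hc, hz]
    norm_num

lemma aux_integrable {X : Type*} [MeasurableSpace X] [TopologicalSpace X]
    [OpensMeasurableSpace X] (μ : Measure X) [IsProbabilityMeasure μ]
    {f : X → ℂ} (hf : Continuous f) (hb : ∀ x, ‖f x‖ = 1) : Integrable f μ := by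
  refine (integrable_const (1:ℝ)).mono' hf.aestronglyMeasurable ?_
  exact Eventually.of_forall fun x => by rw [hb x]

lemma aux_fwd {X : Type*} [MeasurableSpace X] [TopologicalSpace X] [OpensMeasurableSpace X]
    {ν : ℕ → Measure X} (hν : ∀ N, IsProbabilityMeasure (ν N))
    {f : X → ℂ} (hf : Continuous f) (hb : ∀ x, ‖f x‖ = 1)
    (c : ℂ) (hc : ‖c‖ = 1)
    (h : Tendsto (fun N => ∫ x, f x ∂ν N) atTop (𝓝 c)) :
    Tendsto f (densityFilter ν) (𝓝 c) := by
  have hint : ∀ N, Integrable f (ν N) := fun N => by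
    haveI := hν N; exact aux_integrable _ hf hb
  set φ : X → ℝ := fun x => 1 - ((starRingEnd ℂ) c * f x).re with hφ
  have hφnonneg : ∀ x, 0 ≤ φ x := fun x =>
    sub_nonneg.mpr (aux_re_le_one c (f x) hc (hb x))
  have hφint : ∀ N, Integrable φ (ν N) := fun N => by
    haveI := hν N
    exact (integrable_const (1:ℝ)).sub (((hint N).const_mul ((starRingEnd ℂ) c)).re)
  have hφint_eq : ∀ N, ∫ x, φ x ∂ν N = 1 - ((starRingEnd ℂ) c * ∫ x, f x ∂ν N).re := by
    intro N
    haveI := hν N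
    have hint2 : Integrable (fun x => ((starRingEnd ℂ) c * f x).re) (ν N) := by
      simpa using ((hint N).const_mul ((starRingEnd ℂ) c)).re
    rw [hφ]
    rw [integral_sub (integrable_const 1) hint2]
    congr 1
    · simp
    · have h1 := integral_re (μ := ν N) ((hint N).const_mul ((starRingEnd ℂ) c))
      simp only [RCLike.re_to_complex] at h1
      rw [h1, integral_const_mul]
  have hre : ((starRingEnd ℂ) c * c).re = 1 := by
    rw [mul_comm, Complex.mul_conj]
    simp [Complex.normSq_eq_norm_sq, hc]
  have hφlim : Tendsto (fun N => ∫ x, φ x ∂ν N) atTop (𝓝 0) := by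
    simp only [hφint_eq]
    have h2 : Tendsto (fun N => ((starRingEnd ℂ) c * ∫ x, f x ∂ν N).re) atTop
        (𝓝 (((starRingEnd ℂ) c * c).re)) :=
      (Complex.continuous_re.tendsto _).comp (h.const_mul ((starRingEnd ℂ) c))
    have := (tendsto_const_nhds : Tendsto (fun _ : ℕ => (1:ℝ)) atTop (𝓝 1)).sub h2
    simpa [hre] using this
  rw [Metric.tendsto_nhds]
  intro ε hε
  have hJm : MeasurableSet {x | dist (f x) c < ε} :=
    measurableSet_lt (hf.dist continuous_const).measurable measurable_const
  have hsub : {x | dist (f x) c < ε}ᶜ ⊆ {x | ε ^ 2 / 2 ≤ φ x} := by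
    intro x hx
    simp only [Set.mem_compl_iff, Set.mem_setOf_eq, not_lt] at hx
    have h5 : ‖f x - c‖ ^ 2 = 2 - 2 * ((starRingEnd ℂ) c * f x).re :=
      aux_norm_sub_sq _ _ (hb x) hc
    have h6 : ε ≤ ‖f x - c‖ := by rwa [dist_eq_norm] at hx
    have h7 : ε ^ 2 ≤ ‖f x - c‖ ^ 2 := by nlinarith [hε.le, norm_nonneg (f x - c)]
    simp only [Set.mem_setOf_eq, hφ]
    nlinarith
  have cheb : ∀ N, (ν N {x | dist (f x) c < ε}ᶜ).toReal ≤ (2 / ε ^ 2) * ∫ x, φ x ∂ν N := by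
    intro N
    haveI := hν N
    have h8 := mul_meas_ge_le_integral_of_nonneg (μ := ν N)
      (Eventually.of_forall hφnonneg) (hφint N) (ε ^ 2 / 2)
    have h9 : (ν N {x | dist (f x) c < ε}ᶜ).toReal ≤ (ν N {x | ε ^ 2 / 2 ≤ φ x}).toReal :=
      ENNReal.toReal_mono (measure_ne_top _ _) (measure_mono hsub)
    change ε ^ 2 / 2 * (ν N {x | ε ^ 2 / 2 ≤ φ x}).toReal ≤ _ at h8
    rw [div_mul_eq_mul_div, le_div_iff₀ (pow_pos hε 2)]
    nlinarith [mul_le_mul_of_nonneg_right h9 (sq_nonneg ε),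
      ENNReal.toReal_nonneg (a := ν N {x | ε ^ 2 / 2 ≤ φ x})]
  have hlim0 : Tendsto (fun N => (ν N {x | dist (f x) c < ε}ᶜ).toReal) atTop (𝓝 0) := by
    have hupper : Tendsto (fun N => (2 / ε ^ 2) * ∫ x, φ x ∂ν N) atTop (𝓝 0) := by
      have := hφlim.const_mul (2 / ε ^ 2)
      simpa using this
    exact tendsto_of_tendsto_of_tendsto_of_le_of_le tendsto_const_nhds hupper
      (fun N => ENNReal.toReal_nonneg) cheb
  have hcompl : Tendsto (fun N => ν N {x | dist (f x) c < ε}ᶜ) atTop (𝓝 0) := by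
    rw [aux_toReal_tendsto hν (by norm_num)]
    simpa using hlim0
  exact aux_mem_of_gen hJm ((aux_compl_iff hν hJm).mpr hcompl)

lemma aux_bwd {X : Type*} [MeasurableSpace X] [TopologicalSpace X] [OpensMeasurableSpace X]
    {ν : ℕ → Measure X} (hν : ∀ N, IsProbabilityMeasure (ν N))
    {f : X → ℂ} (hf : Continuous f) (hb : ∀ x, ‖f x‖ = 1)
    (c : ℂ) (h : Tendsto f (densityFilter ν) (𝓝 c)) :
    ‖c‖ = 1 ∧ Tendsto (fun N => ∫ x, f x ∂ν N) atTop (𝓝 c) := by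
  haveI := aux_neBot hν
  have hnc : ‖c‖ = 1 := by
    have h1 : Tendsto (fun x => ‖f x‖) (densityFilter ν) (𝓝 ‖c‖) := h.norm
    simp only [hb] at h1
    exact tendsto_nhds_unique h1 tendsto_const_nhds
  refine ⟨hnc, ?_⟩
  have hint : ∀ N, Integrable f (ν N) := fun N => by
    haveI := hν N; exact aux_integrable _ hf hb
  rw [Metric.tendsto_nhds]
  intro ε hε
  have hJ : {x | dist (f x) c < ε / 4} ∈ densityFilter ν :=
    Metric.tendsto_nhds.mp h (ε / 4) (by positivity)
  obtain ⟨K, hKJ, hKm, hKt⟩ := aux_mem_densityFilter hν hJ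
  have hKc : Tendsto (fun N => (ν N Kᶜ).toReal) atTop (𝓝 0) := by
    have h2 := (aux_compl_iff hν hKm).mp hKt
    rw [aux_toReal_tendsto hν (by norm_num)] at h2
    simpa using h2
  have hev : ∀ᶠ N in atTop, (ν N Kᶜ).toReal < ε / 4 :=
    (tendsto_order.1 hKc).2 (ε / 4) (by positivity)
  filter_upwards [hev] with N hN
  haveI := hν N
  have heq : (∫ x, f x ∂ν N) - c = ∫ x, (f x - c) ∂ν N := by
    rw [integral_sub (hint N) (integrable_const c), integral_const]
    simp
  have hsplit : ∫ x, (f x - c) ∂ν N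
      = (∫ x in K, (f x - c) ∂ν N) + ∫ x in Kᶜ, (f x - c) ∂ν N :=
    (integral_add_compl hKm ((hint N).sub (integrable_const c))).symm
  have hb1 : ‖∫ x in K, (f x - c) ∂ν N‖ ≤ (ε / 4) * (ν N K).toReal := by
    refine norm_setIntegral_le_of_norm_le_const (measure_lt_top _ _) ?_
    intro x hx
    have h3 := hKJ hx
    rw [Set.mem_setOf_eq, dist_eq_norm] at h3
    exact h3.le
  have hK1 : (ν N K).toReal ≤ 1 := by
    have h4 : (ν N K).toReal ≤ (1 : ℝ≥0∞).toReal :=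
      ENNReal.toReal_mono (by norm_num) prob_le_one
    simpa using h4
  have hb2 : ‖∫ x in Kᶜ, (f x - c) ∂ν N‖ ≤ 2 * (ν N Kᶜ).toReal := by
    refine norm_setIntegral_le_of_norm_le_const (measure_lt_top _ _) ?_
    intro x _
    calc ‖f x - c‖ ≤ ‖f x‖ + ‖c‖ := norm_sub_le _ _
    _ = 2 := by rw [hb x, hnc]; norm_num
  rw [dist_eq_norm]
  calc ‖(∫ x, f x ∂ν N) - c‖
      = ‖(∫ x in K, (f x - c) ∂ν N) + ∫ x in Kᶜ, (f x - c) ∂ν N‖ := by rw [heq, hsplit]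
  _ ≤ ‖∫ x in K, (f x - c) ∂ν N‖ + ‖∫ x in Kᶜ, (f x - c) ∂ν N‖ := norm_add_le _ _
  _ ≤ (ε / 4) * (ν N K).toReal + 2 * (ν N Kᶜ).toReal := add_le_add hb1 hb2
  _ < ε := by nlinarith [ENNReal.toReal_nonneg (a := ν N K), ENNReal.toReal_nonneg (a := ν N Kᶜ)]

/-- For a measure sequence `ν` on the dual group `H = Ĝ` and `g ∈ G`, the limit
`c_ν(g) = lim_N ∫ ⟨g,h⟩ dν_N(h)` exists with `|c_ν(g)| = 1` iff `h ↦ ⟨g,h⟩` converges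
along the density filter `F_ν`; moreover, in that case the two limits agree. -/
theorem c_nu_filter_equivalent
    {G : Type*} [CommGroup G] [TopologicalSpace G] [IsTopologicalGroup G]
    [LocallyCompactSpace G]
    [MeasurableSpace (PontryaginDual G)] [BorelSpace (PontryaginDual G)]
    (ν : ℕ → Measure (PontryaginDual G)) (hν : ∀ N, IsProbabilityMeasure (ν N))
    (g : G) :
    ((∃ c : ℂ, ‖c‖ = 1 ∧
        Tendsto (fun N => ∫ h, ((h g : ℂ)) ∂ν N) atTop (𝓝 c)) ↔
      (∃ c : ℂ, Tendsto (fun h : PontryaginDual G => ((h g : ℂ)))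
        (densityFilter ν) (𝓝 c))) ∧
    (∀ c : ℂ, ‖c‖ = 1 →
      Tendsto (fun N => ∫ h, ((h g : ℂ)) ∂ν N) atTop (𝓝 c) →
      Tendsto (fun h : PontryaginDual G => ((h g : ℂ))) (densityFilter ν) (𝓝 c)) := by
  have hf : Continuous (fun h : PontryaginDual G => ((h g : ℂ))) := by
    show Continuous (fun h : ContinuousMonoidHom G Circle => ((h g : ℂ)))
    exact continuous_subtype_val.comp (continuous_eval_const g)
  have hb : ∀ h : PontryaginDual G, ‖((h g : ℂ))‖ = 1 := fun h => by
    exact Circle.norm_coe _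
  constructor
  · constructor
    · rintro ⟨c, hc1, hc2⟩
      exact ⟨c, aux_fwd hν hf hb c hc1 hc2⟩
    · rintro ⟨c, hc⟩
      obtain ⟨h1, h2⟩ := aux_bwd hν hf hb c hc
      exact ⟨c, h1, h2⟩
  · intro c hc1 hc2
    exact aux_fwd hν hf hb c hc1 hc2
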